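/- Decay of expected spins at high temperature: let β < 1. (i) For all σ ∈ Ω, all t ≥ 0, and every vertex i, |E_σ[S(X_t)]| ≤ 2e^{-(1−β)t/n} and |E_σ[X_t(i)]| ≤ 2e^{-(1−β)t/n}. (ii) For any subset A of vertices, setting M_t(A) := (1/2)Σ_{i∈A} X_t(i), one has |E_σ[M_t(A)]| ≤ |A|·e^{-(1−β)t/n}, and Var(M_t(A)) ≤ c·n for some constant c > 0 depending only on β. (iii) There is a constant C > 0 depending only on β such that for any subset A of vertices and all σ ∈ Ω, E_σ[|M_t(A)|] ≤ n·e^{-(1−β)t/n} + C√n. -/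

import Mathlib

open Filter Real

namespace CW

/-- Configurations of the Curie-Weiss model on `n` vertices:
`true` encodes spin `+1` and `false` encodes spin `-1`. -/
abbrev Config (n : ℕ) := Fin n → Bool

noncomputable section

/-- The spin (±1) at site `i`. -/
def spin {n : ℕ} (σ : Config n) (i : Fin n) : ℝ := if σ i then 1 else -1

/-- Normalized magnetization `S(σ) = n⁻¹ ∑ᵢ σ(i)`. -/
def mag {n : ℕ} (σ : Config n) : ℝ := (∑ i, spin σ i) / n

/-- `p₊(s) = (1 + tanh(βs))/2`. -/
def pPlus (β s : ℝ) : ℝ := (1 + Real.tanh (β * s)) / 2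

/-- One-step transition kernel of the Glauber dynamics for the Curie-Weiss
model: a uniformly chosen site `i` is refreshed, becoming `+1` with
probability `p₊(S(σ) - σ(i)/n)`. -/
def glauberKernel (β : ℝ) (n : ℕ) (σ η : Config n) : ℝ :=
  (1 / n) * ∑ i : Fin n,
    if ∀ j, j ≠ i → η j = σ j then
      (if η i then pPlus β (mag σ - spin σ i / n)
       else 1 - pPlus β (mag σ - spin σ i / n))
    else 0

/-- Law of the Glauber dynamics at time `t` started from `σ`. -/
def glauberLaw (β : ℝ) (n : ℕ) : ℕ → Config n → Config n → ℝ
  | 0, σ, η => if η = σ then 1 else 0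
  | t + 1, σ, η => ∑ τ : Config n, glauberLaw β n t σ τ * glauberKernel β n τ η

/-- The (normalized) exponent in the Curie-Weiss measure. -/
def cwExponent {n : ℕ} (β : ℝ) (σ : Config n) : ℝ :=
  (β / n) * ∑ i : Fin n, ∑ j : Fin n, if i < j then spin σ i * spin σ j else 0

/-- The Curie-Weiss (mean-field Ising) probability measure
`μ(σ) = Z(β)⁻¹ exp((β/n) ∑_{i<j} σ(i)σ(j))`. -/
def cwMeasure (β : ℝ) (n : ℕ) (σ : Config n) : ℝ :=
  Real.exp (cwExponent β σ) / ∑ η : Config n, Real.exp (cwExponent β η)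

/-- Total variation distance between two (discrete) distributions. -/
def tvDist {Ω : Type*} [Fintype Ω] (μ ν : Ω → ℝ) : ℝ :=
  (∑ x, |μ x - ν x|) / 2

/-- Worst-case total variation distance to stationarity at time `t`. -/
def glauberDist (β : ℝ) (n t : ℕ) : ℝ :=
  ⨆ σ : Config n, tvDist (glauberLaw β n t σ) (cwMeasure β n)


/-- probability that the refreshed spin at `i` is `+1`. -/
def prob {n : ℕ} (β : ℝ) (τ : Config n) (i : Fin n) : ℝ :=
  pPlus β (mag τ - spin τ i / n)

/-- One-step transition operator acting on functions. -/
def Kop (β : ℝ) {n : ℕ} (g : Config n → ℝ) (τ : Config n) : ℝ :=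
  (1 / n) * ∑ i : Fin n,
    (prob β τ i * g (Function.update τ i true)
      + (1 - prob β τ i) * g (Function.update τ i false))

def flip {n : ℕ} (j : Fin n) (σ : Config n) : Config n := Function.update σ j (!(σ j))
def neg {n : ℕ} (σ : Config n) : Config n := fun i => !(σ i)

lemma abs_tanh_le_one (x : ℝ) : |Real.tanh x| ≤ 1 := by
  rw [Real.tanh_eq_sinh_div_cosh, abs_div, abs_of_pos (Real.cosh_pos x),
    div_le_one (Real.cosh_pos x)]
  have h := Real.sinh_sq x
  nlinarith [sq_abs (Real.sinh x), Real.cosh_pos x, Real.one_le_cosh x]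

lemma hasDerivAt_tanh (x : ℝ) : HasDerivAt Real.tanh (1 / Real.cosh x ^ 2) x := by
  have h := (Real.hasDerivAt_sinh x).div (Real.hasDerivAt_cosh x) (ne_of_gt (Real.cosh_pos x))
  have e : (Real.cosh x * Real.cosh x - Real.sinh x * Real.sinh x) / Real.cosh x ^ 2
      = 1 / Real.cosh x ^ 2 := by
    rw [show Real.cosh x * Real.cosh x - Real.sinh x * Real.sinh x = 1 by
      nlinarith [Real.cosh_sq_sub_sinh_sq x]]
  rw [← e]
  have : Real.tanh = fun y => Real.sinh y / Real.cosh y := by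
    funext y; exact Real.tanh_eq_sinh_div_cosh y
  rw [this]; exact h

lemma tanh_monotone : Monotone Real.tanh := by
  apply monotone_of_deriv_nonneg
  · exact fun x => (hasDerivAt_tanh x).differentiableAt
  · intro x; rw [(hasDerivAt_tanh x).deriv]; positivity

lemma id_sub_tanh_monotone : Monotone (fun x => x - Real.tanh x) := by
  apply monotone_of_deriv_nonneg
  · exact fun x => (differentiable_id x).sub (hasDerivAt_tanh x).differentiableAt
  · intro x
    have h : HasDerivAt (fun x => x - Real.tanh x) (1 - 1 / Real.cosh x ^ 2) x :=
      (hasDerivAt_id x).sub (hasDerivAt_tanh x)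
    rw [h.deriv]
    have h1 : (1:ℝ) ≤ Real.cosh x ^ 2 := by nlinarith [Real.one_le_cosh x]
    have : 1 / Real.cosh x ^ 2 ≤ 1 := by rw [div_le_one (by positivity)]; exact h1
    linarith

lemma tanh_lipschitz (x y : ℝ) : |Real.tanh x - Real.tanh y| ≤ |x - y| := by
  rcases le_total x y with h | h
  · have h1 := tanh_monotone h
    have h2 := id_sub_tanh_monotone h
    simp only at h2
    rw [abs_sub_comm, abs_of_nonneg (by linarith), abs_sub_comm, abs_of_nonneg (by linarith)]
    linarith
  · have h1 := tanh_monotone h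
    have h2 := id_sub_tanh_monotone h
    simp only at h2
    rw [abs_of_nonneg (by linarith), abs_of_nonneg (by linarith)]
    linarith

lemma pPlus_nonneg {β : ℝ} (s : ℝ) : 0 ≤ pPlus β s := by
  have := abs_tanh_le_one (β * s); unfold pPlus
  rw [abs_le] at this; linarith [this.1]

lemma pPlus_le_one {β : ℝ} (s : ℝ) : pPlus β s ≤ 1 := by
  have := abs_tanh_le_one (β * s); unfold pPlus
  rw [abs_le] at this; linarith [this.2]

lemma pPlus_lipschitz {β : ℝ} (hβ0 : 0 ≤ β) (s s' : ℝ) :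
    |pPlus β s - pPlus β s'| ≤ β / 2 * |s - s'| := by
  unfold pPlus
  have h := tanh_lipschitz (β * s) (β * s')
  rw [show β * s - β * s' = β * (s - s') by ring, abs_mul, abs_of_nonneg hβ0] at h
  have e : (1 + Real.tanh (β * s)) / 2 - (1 + Real.tanh (β * s')) / 2
      = (Real.tanh (β * s) - Real.tanh (β * s')) / 2 := by ring
  rw [e, abs_div, abs_two]
  linarith

section Fixed
variable {n : ℕ}

lemma spin_flip_self (j : Fin n) (σ : Config n) : spin (flip j σ) j = -spin σ j := by
  unfold spin flip; rcases h : σ j with _ | _ <;> simp [h, Function.update_self]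

lemma spin_flip_other {j k : Fin n} (h : k ≠ j) (σ : Config n) :
    spin (flip j σ) k = spin σ k := by
  unfold spin flip; rw [Function.update_of_ne h]

lemma abs_spin (σ : Config n) (i : Fin n) : |spin σ i| = 1 := by
  unfold spin; rcases σ i <;> simp

lemma mag_flip (j : Fin n) (σ : Config n) :
    mag (flip j σ) = mag σ - 2 * spin σ j / n := by
  unfold mag
  have : ∑ i, spin (flip j σ) i = (∑ i, spin σ i) - 2 * spin σ j := by
    rw [← Finset.add_sum_erase _ _ (Finset.mem_univ j),
        ← Finset.add_sum_erase _ (spin σ) (Finset.mem_univ j), spin_flip_self,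
        Finset.sum_congr rfl (fun k hk => spin_flip_other (Finset.ne_of_mem_erase hk) σ)]
    ring
  rw [this]; ring

lemma prob_flip_self (β : ℝ) (j : Fin n) (σ : Config n) :
    prob β (flip j σ) j = prob β σ j := by
  unfold prob
  rw [mag_flip, spin_flip_self]
  congr 1; ring

lemma prob_flip_other {β : ℝ} (hβ0 : 0 ≤ β) {i j : Fin n} (h : i ≠ j) (σ : Config n) :
    |prob β σ i - prob β (flip j σ) i| ≤ β / n := by
  unfold prob
  rw [mag_flip, spin_flip_other h]
  have h1 := pPlus_lipschitz hβ0 (mag σ - spin σ i / n) (mag (flip j σ) - spin (flip j σ) i / n)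
  rw [spin_flip_other h, mag_flip] at h1
  have h2 : |mag σ - spin σ i / ↑n - (mag σ - 2 * spin σ j / ↑n - spin σ i / ↑n)|
      = 2 / n := by
    rw [show mag σ - spin σ i / ↑n - (mag σ - 2 * spin σ j / ↑n - spin σ i / ↑n)
        = 2 * spin σ j / ↑n by ring, abs_div, abs_mul, abs_spin]
    simp [abs_of_nonneg (Nat.cast_nonneg n : (0:ℝ) ≤ n)]
  rw [h2] at h1
  calc _ ≤ β / 2 * (2 / n) := h1
    _ = β / n := by ring

lemma update_flip_comm {i j : Fin n} (h : i ≠ j) (σ : Config n) (b : Bool) :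
    Function.update (flip j σ) i b = flip j (Function.update σ i b) := by
  unfold flip
  rw [Function.update_comm h, Function.update_of_ne (Ne.symm h)]

lemma flip_update_false (i : Fin n) (τ : Config n) :
    Function.update τ i true = flip i (Function.update τ i false) := by
  simp [flip, Function.update_idem]

lemma update_eq_or_flip (τ : Config n) (i : Fin n) (b : Bool) :
    Function.update τ i b = τ ∨ Function.update τ i b = flip i τ := by
  by_cases h : τ i = b
  · left; rw [← h, Function.update_eq_self]
  · right; unfold flip
    have hb : b = !(τ i) := by rcases hτ : τ i <;> rcases b <;> simp_all
    rw [hb]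


lemma prob_nonneg (β : ℝ) (τ : Config n) (i : Fin n) : 0 ≤ prob β τ i := pPlus_nonneg _
lemma prob_le_one (β : ℝ) (τ : Config n) (i : Fin n) : prob β τ i ≤ 1 := pPlus_le_one _

/-- `ℓ` is a flip-Lipschitz profile for `g`. -/
def Profile (g : Config n → ℝ) (ℓ : Fin n → ℝ) : Prop :=
  ∀ σ j, |g σ - g (flip j σ)| ≤ ℓ j

/-- evolution of profiles -/
def Aop (β : ℝ) (n : ℕ) (ℓ : Fin n → ℝ) : Fin n → ℝ :=
  fun j => (1 - 1/n) * ℓ j + (β / n^2) * ∑ i, ℓ i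

lemma kop_profile_step (hn : 0 < n) {β : ℝ} (hβ0 : 0 ≤ β)
    {g : Config n → ℝ} {ℓ : Fin n → ℝ} (hℓ : ∀ i, 0 ≤ ℓ i) (hg : Profile g ℓ) :
    Profile (Kop β g) (Aop β n ℓ) := by
  intro σ j
  set σ' := flip j σ with hσ'
  have hterm : ∀ i : Fin n,
      |(prob β σ i * g (Function.update σ i true)
          + (1 - prob β σ i) * g (Function.update σ i false))
        - (prob β σ' i * g (Function.update σ' i true)
          + (1 - prob β σ' i) * g (Function.update σ' i false))|
      ≤ if i = j then 0 else ℓ j + (β / n) * ℓ i := by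
    intro i
    by_cases hij : i = j
    · subst hij
      have hp : prob β σ' i = prob β σ i := prob_flip_self β i σ
      have hT : Function.update σ' i true = Function.update σ i true := by
        unfold σ'; unfold flip; rw [Function.update_idem]
      have hF : Function.update σ' i false = Function.update σ i false := by
        unfold σ'; unfold flip; rw [Function.update_idem]
      rw [hp, hT, hF]; simp
    · rw [if_neg hij]
      set p := prob β σ i
      set p' := prob β σ' i
      set a := g (Function.update σ i true)
      set b := g (Function.update σ i false)
      set a' := g (Function.update σ' i true)
      set b' := g (Function.update σ' i false)
      have key : p * a + (1 - p) * b - (p' * a' + (1 - p') * b')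
          = p * (a - a') + (1 - p) * (b - b') + (p - p') * (a' - b') := by ring
      have haa : |a - a'| ≤ ℓ j := by
        have : Function.update σ' i true = flip j (Function.update σ i true) := by
          rw [hσ', update_flip_comm hij]
        rw [show a' = g (flip j (Function.update σ i true)) by rw [← this]]
        exact hg _ j
      have hbb : |b - b'| ≤ ℓ j := by
        have : Function.update σ' i false = flip j (Function.update σ i false) := by
          rw [hσ', update_flip_comm hij]
        rw [show b' = g (flip j (Function.update σ i false)) by rw [← this]]
        exact hg _ j
      have hab : |a' - b'| ≤ ℓ i := by
        rw [show a' = g (flip i (Function.update σ' i false)) by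
          rw [← flip_update_false]]
        rw [abs_sub_comm]
        exact hg _ i
      have hpp : |p - p'| ≤ β / n := prob_flip_other hβ0 hij σ
      have hp0 : 0 ≤ p := prob_nonneg β σ i
      have hp1 : p ≤ 1 := prob_le_one β σ i
      rw [key]
      calc |p * (a - a') + (1 - p) * (b - b') + (p - p') * (a' - b')|
          ≤ |p * (a - a')| + |(1 - p) * (b - b')| + |(p - p') * (a' - b')| := by
            exact (abs_add_three _ _ _)
        _ ≤ p * ℓ j + (1 - p) * ℓ j + (β / n) * ℓ i := by
            have e1 : |p * (a - a')| ≤ p * ℓ j := by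
              rw [abs_mul, abs_of_nonneg hp0]
              exact mul_le_mul_of_nonneg_left haa hp0
            have e2 : |(1 - p) * (b - b')| ≤ (1 - p) * ℓ j := by
              rw [abs_mul, abs_of_nonneg (show (0:ℝ) ≤ 1 - p by linarith)]
              exact mul_le_mul_of_nonneg_left hbb (by linarith)
            have e3 : |(p - p') * (a' - b')| ≤ (β / n) * ℓ i := by
              rw [abs_mul]
              exact mul_le_mul hpp hab (abs_nonneg _) (by positivity)
            linarith
        _ = ℓ j + (β / n) * ℓ i := by ring
  have hsum : |Kop β g σ - Kop β g σ'| ≤ (1 / n) * ∑ i : Fin n,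
      (if i = j then 0 else ℓ j + (β / n) * ℓ i) := by
    unfold Kop
    rw [← mul_sub, ← Finset.sum_sub_distrib, abs_mul]
    have h0 : |(1:ℝ) / n| = 1 / n := abs_of_nonneg (by positivity)
    rw [h0]
    refine mul_le_mul_of_nonneg_left ?_ (by positivity)
    exact (Finset.abs_sum_le_sum_abs _ _).trans (Finset.sum_le_sum fun i _ => hterm i)
  refine hsum.trans ?_
  have hcard : ∑ i : Fin n, (if i = j then 0 else ℓ j + (β / n) * ℓ i)
      ≤ (n - 1) * ℓ j + (β / n) * ∑ i, ℓ i := by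
    rw [← Finset.add_sum_erase _ _ (Finset.mem_univ j), if_pos rfl, zero_add]
    have h1 : ∑ i ∈ Finset.univ.erase j, (if i = j then 0 else ℓ j + (β / n) * ℓ i)
        = ∑ i ∈ Finset.univ.erase j, (ℓ j + (β / n) * ℓ i) :=
      Finset.sum_congr rfl fun i hi => if_neg (Finset.ne_of_mem_erase hi)
    rw [h1, Finset.sum_add_distrib, Finset.sum_const, ← Finset.mul_sum,
      Finset.card_erase_of_mem (Finset.mem_univ j)]
    have h2 : ∑ i ∈ Finset.univ.erase j, ℓ i ≤ ∑ i, ℓ i :=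
      Finset.sum_le_sum_of_subset_of_nonneg (Finset.erase_subset _ _)
        (fun i _ _ => hℓ i)
    have h3 : (((Finset.univ : Finset (Fin n)).card - 1 : ℕ) : ℝ) = (n : ℝ) - 1 := by
      rw [Finset.card_univ, Fintype.card_fin]
      rw [Nat.cast_sub hn]; simp
    rw [nsmul_eq_mul, h3]
    have := mul_le_mul_of_nonneg_left h2 (by positivity : (0:ℝ) ≤ β / n)
    linarith
  have hn' : (n : ℝ) ≠ 0 := Nat.cast_ne_zero.mpr hn.ne'
  calc (1 / n : ℝ) * ∑ i : Fin n, (if i = j then 0 else ℓ j + (β / n) * ℓ i)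
      ≤ (1 / n) * ((n - 1) * ℓ j + (β / n) * ∑ i, ℓ i) :=
        mul_le_mul_of_nonneg_left hcard (by positivity)
    _ = Aop β n ℓ j := by unfold Aop; field_simp


variable {β : ℝ}

lemma aop_nonneg (hn : 0 < n) (hβ0 : 0 ≤ β) {ℓ : Fin n → ℝ} (hℓ : ∀ i, 0 ≤ ℓ i) :
    ∀ j, 0 ≤ Aop β n ℓ j := by
  intro j
  unfold Aop
  have h1 : (1:ℝ)/n ≤ 1 := by
    rw [div_le_one (by exact_mod_cast hn)]
    exact_mod_cast hn
  have h2 : (0:ℝ) ≤ ∑ i, ℓ i := Finset.sum_nonneg fun i _ => hℓ i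
  have := hℓ j
  have : (0:ℝ) ≤ (β / n^2) * ∑ i, ℓ i := by positivity
  nlinarith [hℓ j]

lemma aop_sum (hn : 0 < n) (ℓ : Fin n → ℝ) :
    ∑ j, Aop β n ℓ j = (1 - (1 - β)/n) * ∑ j, ℓ j := by
  unfold Aop
  rw [Finset.sum_add_distrib, ← Finset.mul_sum, Finset.sum_const, Finset.card_univ,
    Fintype.card_fin, nsmul_eq_mul]
  have hn' : (n : ℝ) ≠ 0 := Nat.cast_ne_zero.mpr hn.ne'
  field_simp
  ring

lemma aop_ptwise (hn : 0 < n) (hβ0 : 0 ≤ β) {ℓ : Fin n → ℝ} {c : ℝ} (hc : 0 ≤ c)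
    (hℓ : ∀ i, ℓ i ≤ c) (hℓ0 : ∀ i, 0 ≤ ℓ i) :
    ∀ j, Aop β n ℓ j ≤ (1 - (1 - β)/n) * c := by
  intro j
  unfold Aop
  have hn' : (0:ℝ) < n := by exact_mod_cast hn
  have h2 : ∑ i, ℓ i ≤ n * c := by
    calc ∑ i, ℓ i ≤ ∑ _i : Fin n, c := Finset.sum_le_sum fun i _ => hℓ i
      _ = n * c := by rw [Finset.sum_const, Finset.card_univ, Fintype.card_fin, nsmul_eq_mul]
  have h1 : (1 - 1/(n:ℝ)) * ℓ j ≤ (1 - 1/n) * c := by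
    apply mul_le_mul_of_nonneg_left (hℓ j)
    rw [sub_nonneg, div_le_one hn']
    exact_mod_cast hn
  have h3 : (β / n^2) * ∑ i, ℓ i ≤ (β / n^2) * (n * c) := by
    apply mul_le_mul_of_nonneg_left h2 (by positivity)
  have e : (1 - 1/(n:ℝ)) * c + (β / n^2) * (n * c) = (1 - (1 - β)/n) * c := by
    field_simp
    ring
  linarith

lemma kop_const (hn : 0 < n) (c : ℝ) (τ : Config n) : Kop β (fun _ => c) τ = c := by
  unfold Kop
  have : ∀ i : Fin n, prob β τ i * c + (1 - prob β τ i) * c = c := fun i => by ring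
  rw [Finset.sum_congr rfl fun i _ => this i, Finset.sum_const, Finset.card_univ,
    Fintype.card_fin, nsmul_eq_mul]
  have hn' : (n : ℝ) ≠ 0 := Nat.cast_ne_zero.mpr hn.ne'
  field_simp

lemma kop_mono {u v : Config n → ℝ} (huv : ∀ τ, u τ ≤ v τ) :
    ∀ τ, Kop β u τ ≤ Kop β v τ := by
  intro τ
  unfold Kop
  apply mul_le_mul_of_nonneg_left _ (by positivity)
  apply Finset.sum_le_sum
  intro i _
  have h1 := prob_nonneg β τ i
  have h2 := prob_le_one β τ i
  have := huv (Function.update τ i true)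
  have := huv (Function.update τ i false)
  nlinarith

lemma kop_add_const (hn : 0 < n) (u : Config n → ℝ) (c : ℝ) (τ : Config n) :
    Kop β (fun x => u x + c) τ = Kop β u τ + c := by
  unfold Kop
  have : ∀ i : Fin n, prob β τ i * (u (Function.update τ i true) + c)
      + (1 - prob β τ i) * (u (Function.update τ i false) + c)
      = (prob β τ i * u (Function.update τ i true)
        + (1 - prob β τ i) * u (Function.update τ i false)) + c := fun i => by ring
  rw [Finset.sum_congr rfl fun i _ => this i, Finset.sum_add_distrib, Finset.sum_const,
    Finset.card_univ, Fintype.card_fin, nsmul_eq_mul, mul_add]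
  have hn' : (n : ℝ) ≠ 0 := Nat.cast_ne_zero.mpr hn.ne'
  field_simp

lemma kop_iter_mono (t : ℕ) {u v : Config n → ℝ} (huv : ∀ τ, u τ ≤ v τ) :
    ∀ τ, (Kop β)^[t] u τ ≤ (Kop β)^[t] v τ := by
  induction t generalizing u v with
  | zero => exact huv
  | succ t ih =>
    rw [Function.iterate_succ_apply, Function.iterate_succ_apply]
    exact ih (kop_mono huv)

lemma kop_iter_add_const (hn : 0 < n) (t : ℕ) (u : Config n → ℝ) (c : ℝ) (τ : Config n) :
    (Kop β)^[t] (fun x => u x + c) τ = (Kop β)^[t] u τ + c := by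
  induction t generalizing u τ with
  | zero => rfl
  | succ t ih =>
    rw [Function.iterate_succ_apply, Function.iterate_succ_apply]
    have : Kop β (fun x => u x + c) = fun x => Kop β u x + c := by
      funext x; exact kop_add_const hn u c x
    rw [this]
    exact ih _ _

lemma kop_iter_profile (hn : 0 < n) (hβ0 : 0 ≤ β) (t : ℕ)
    {g : Config n → ℝ} {ℓ : Fin n → ℝ} (hℓ : ∀ i, 0 ≤ ℓ i) (hg : Profile g ℓ) :
    Profile ((Kop β)^[t] g) ((Aop β n)^[t] ℓ) := by
  induction t generalizing g ℓ with
  | zero => exact hg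
  | succ t ih =>
    rw [Function.iterate_succ_apply, Function.iterate_succ_apply]
    exact ih (aop_nonneg hn hβ0 hℓ) (kop_profile_step hn hβ0 hℓ hg)

lemma aop_iter_nonneg (hn : 0 < n) (hβ0 : 0 ≤ β) (t : ℕ)
    {ℓ : Fin n → ℝ} (hℓ : ∀ i, 0 ≤ ℓ i) : ∀ i, 0 ≤ (Aop β n)^[t] ℓ i := by
  induction t generalizing ℓ with
  | zero => exact hℓ
  | succ t ih =>
    rw [Function.iterate_succ_apply]
    exact ih (aop_nonneg hn hβ0 hℓ)

lemma aop_iter_sum (hn : 0 < n) (t : ℕ) (ℓ : Fin n → ℝ) :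
    ∑ j, (Aop β n)^[t] ℓ j = (1 - (1 - β)/n)^t * ∑ j, ℓ j := by
  induction t generalizing ℓ with
  | zero => simp
  | succ t ih =>
    rw [Function.iterate_succ_apply, ih, aop_sum hn, pow_succ]
    ring

lemma aop_iter_ptwise (hn : 0 < n) (hβ0 : 0 ≤ β) (hβ1 : β ≤ 1) (t : ℕ) :
    ∀ (ℓ : Fin n → ℝ) (c : ℝ), 0 ≤ c → (∀ i, ℓ i ≤ c) → (∀ i, 0 ≤ ℓ i) →
    ∀ j, (Aop β n)^[t] ℓ j ≤ (1 - (1 - β)/n)^t * c := by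
  induction t with
  | zero => intro ℓ c hc hℓ hℓ0; simpa using hℓ
  | succ t ih =>
    intro ℓ c hc hℓ hℓ0
    rw [Function.iterate_succ_apply]
    intro j
    have hρ : 0 ≤ 1 - (1 - β)/(n:ℝ) := by
      have hn' : (1:ℝ) ≤ n := by exact_mod_cast hn
      have : (1 - β)/(n:ℝ) ≤ 1 - β := by
        apply div_le_self (by linarith) hn'
      linarith
    have := ih (Aop β n ℓ) ((1 - (1 - β)/n) * c) (by positivity)
      (aop_ptwise hn hβ0 hc hℓ hℓ0) (aop_nonneg hn hβ0 hℓ0)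
    calc (Aop β n)^[t] (Aop β n ℓ) j ≤ (1 - (1 - β)/n)^t * ((1 - (1 - β)/n) * c) := this j
      _ = (1 - (1 - β)/n)^(t+1) * c := by ring


lemma spin_neg (σ : Config n) (i : Fin n) : spin (neg σ) i = -spin σ i := by
  unfold spin neg; rcases h : σ i <;> simp [h]

lemma mag_neg (σ : Config n) : mag (neg σ) = -mag σ := by
  unfold mag
  rw [Finset.sum_congr rfl fun i _ => spin_neg σ i, Finset.sum_neg_distrib]
  ring

lemma prob_neg (σ : Config n) (i : Fin n) : prob β (neg σ) i = 1 - prob β σ i := by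
  unfold prob pPlus
  rw [mag_neg, spin_neg]
  have : β * (-mag σ - -spin σ i / ↑n) = -(β * (mag σ - spin σ i / n)) := by ring
  rw [this, Real.tanh_neg]
  ring

lemma update_neg (σ : Config n) (i : Fin n) (b : Bool) :
    Function.update (neg σ) i b = neg (Function.update σ i (!b)) := by
  funext j
  by_cases h : j = i
  · subst h; simp [Function.update_self, neg]
  · simp [Function.update_of_ne h, neg]

lemma kop_odd {g : Config n → ℝ} (hg : ∀ σ, g (neg σ) = -g σ) :
    ∀ σ, Kop β g (neg σ) = -Kop β g σ := by
  intro σ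
  unfold Kop
  have h : ∀ i : Fin n, prob β (neg σ) i * g (Function.update (neg σ) i true)
      + (1 - prob β (neg σ) i) * g (Function.update (neg σ) i false)
      = -(prob β σ i * g (Function.update σ i true)
          + (1 - prob β σ i) * g (Function.update σ i false)) := by
    intro i
    rw [prob_neg, update_neg, update_neg, hg, hg]
    simp only [Bool.not_true, Bool.not_false]
    ring
  rw [Finset.sum_congr rfl fun i _ => h i, Finset.sum_neg_distrib]
  ring

lemma kop_iter_odd (t : ℕ) {g : Config n → ℝ} (hg : ∀ σ, g (neg σ) = -g σ) :
    ∀ σ, (Kop β)^[t] g (neg σ) = -(Kop β)^[t] g σ := by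
  induction t generalizing g with
  | zero => exact hg
  | succ t ih =>
    intro σ
    rw [Function.iterate_succ_apply']
    exact kop_odd (ih hg) σ

/-- flip the spins in a set of sites -/
def flipSet (s : Finset (Fin n)) (σ : Config n) : Config n :=
  fun i => if i ∈ s then !(σ i) else σ i

lemma flipSet_insert {s : Finset (Fin n)} {j : Fin n} (hj : j ∉ s) (σ : Config n) :
    flipSet (insert j s) σ = flip j (flipSet s σ) := by
  funext i
  unfold flipSet flip
  by_cases h : i = j
  · subst h
    simp [Function.update_self, hj]
  · simp [Function.update_of_ne h, h]

lemma flipSet_univ (σ : Config n) : flipSet Finset.univ σ = neg σ := by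
  funext i; simp [flipSet, neg]

lemma profile_flipSet {g : Config n → ℝ} {ℓ : Fin n → ℝ} (hg : Profile g ℓ)
    (s : Finset (Fin n)) (σ : Config n) :
    |g σ - g (flipSet s σ)| ≤ ∑ j ∈ s, ℓ j := by
  induction s using Finset.induction_on with
  | empty =>
    have h : flipSet (∅ : Finset (Fin n)) σ = σ := by funext i; simp [flipSet]
    simp [h]
  | @insert j s hj ih =>
    rw [flipSet_insert hj, Finset.sum_insert hj]
    calc |g σ - g (flip j (flipSet s σ))|
        ≤ |g σ - g (flipSet s σ)| + |g (flipSet s σ) - g (flip j (flipSet s σ))| := by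
          have := abs_sub_le (g σ) (g (flipSet s σ)) (g (flip j (flipSet s σ)))
          linarith
      _ ≤ (∑ j ∈ s, ℓ j) + ℓ j := add_le_add ih (hg _ j)
      _ = ℓ j + ∑ j ∈ s, ℓ j := by ring

/-- Main decay estimate for odd Lipschitz observables. -/
lemma kop_iter_abs_le (hn : 0 < n) (hβ0 : 0 ≤ β) (t : ℕ)
    {g : Config n → ℝ} {ℓ : Fin n → ℝ} (hℓ : ∀ i, 0 ≤ ℓ i) (hg : Profile g ℓ)
    (hodd : ∀ σ, g (neg σ) = -g σ) (σ : Config n) :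
    |(Kop β)^[t] g σ| ≤ (1 - (1 - β)/n)^t * (∑ i, ℓ i) / 2 := by
  have h1 : |(Kop β)^[t] g σ - (Kop β)^[t] g (neg σ)| ≤ ∑ j, (Aop β n)^[t] ℓ j := by
    rw [← flipSet_univ σ]
    exact profile_flipSet (kop_iter_profile hn hβ0 t hℓ hg) Finset.univ σ
  rw [kop_iter_odd t hodd σ, sub_neg_eq_add, aop_iter_sum hn] at h1
  have h2 : |(Kop β)^[t] g σ + (Kop β)^[t] g σ| = 2 * |(Kop β)^[t] g σ| := by
    rw [← two_mul, abs_mul]; simp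
  rw [h2] at h1
  linarith


lemma kop_onestep_var (hn : 0 < n) {g : Config n → ℝ} {ℓ : Fin n → ℝ}
    (hℓ : ∀ i, 0 ≤ ℓ i) (hg : Profile g ℓ) (τ : Config n) :
    Kop β (fun x => (g x)^2) τ ≤ (Kop β g τ)^2 + (1/n) * ∑ i, (ℓ i)^2 := by
  set c := g τ with hc
  have hn' : (n : ℝ) ≠ 0 := Nat.cast_ne_zero.mpr hn.ne'
  have habs : ∀ (i : Fin n) (b : Bool), |g (Function.update τ i b) - c| ≤ ℓ i := by
    intro i b
    rcases update_eq_or_flip τ i b with h | h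
    · rw [h]; simp [hc, hℓ i]
    · rw [h, abs_sub_comm]; exact hg τ i
  have key : Kop β (fun x => (g x - c)^2) τ
      = Kop β (fun x => (g x)^2) τ - 2*c*(Kop β g τ) + c^2 := by
    unfold Kop
    have e : ∀ i : Fin n,
        prob β τ i * (g (Function.update τ i true) - c)^2
          + (1 - prob β τ i) * (g (Function.update τ i false) - c)^2
        = (prob β τ i * (g (Function.update τ i true))^2
            + (1 - prob β τ i) * (g (Function.update τ i false))^2)
          + (-(2*c) * (prob β τ i * g (Function.update τ i true)
              + (1 - prob β τ i) * g (Function.update τ i false)) + c^2) := fun i => by ring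
    rw [Finset.sum_congr rfl fun i _ => e i, Finset.sum_add_distrib, Finset.sum_add_distrib,
      Finset.sum_add_distrib, ← Finset.mul_sum, Finset.sum_const, Finset.card_univ,
      Fintype.card_fin, nsmul_eq_mul]
    field_simp
    ring
  have hle : Kop β (fun x => (g x - c)^2) τ ≤ (1/n) * ∑ i, (ℓ i)^2 := by
    unfold Kop
    apply mul_le_mul_of_nonneg_left _ (by positivity)
    apply Finset.sum_le_sum
    intro i _
    dsimp only
    have h1 := prob_nonneg β τ i
    have h2 := prob_le_one β τ i
    have hT : (g (Function.update τ i true) - c)^2 ≤ (ℓ i)^2 := by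
      have := habs i true
      nlinarith [abs_nonneg (g (Function.update τ i true) - c),
        sq_abs (g (Function.update τ i true) - c)]
    have hF : (g (Function.update τ i false) - c)^2 ≤ (ℓ i)^2 := by
      have := habs i false
      nlinarith [abs_nonneg (g (Function.update τ i false) - c),
        sq_abs (g (Function.update τ i false) - c)]
    nlinarith
  nlinarith [sq_nonneg (Kop β g τ - c)]

lemma kop_var_telescope (hn : 0 < n) (hβ0 : 0 ≤ β) :
    ∀ (t : ℕ) (g : Config n → ℝ) (ℓ : Fin n → ℝ), (∀ i, 0 ≤ ℓ i) → Profile g ℓ →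
    ∀ σ, (Kop β)^[t] (fun x => (g x)^2) σ - ((Kop β)^[t] g σ)^2
      ≤ ∑ s ∈ Finset.range t, (1/n) * ∑ i, ((Aop β n)^[s] ℓ i)^2 := by
  intro t
  induction t with
  | zero => intro g ℓ hℓ hg σ; simp
  | succ t ih =>
    intro g ℓ hℓ hg σ
    rw [Function.iterate_succ_apply, Function.iterate_succ_apply]
    have B0 : ∀ τ, Kop β (fun x => (g x)^2) τ
        ≤ (Kop β g τ)^2 + (1/n) * ∑ i, (ℓ i)^2 :=
      fun τ => kop_onestep_var hn hℓ hg τ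
    have mono := kop_iter_mono (β := β) t B0 σ
    have addc := kop_iter_add_const (β := β) hn t (fun x => (Kop β g x)^2)
      ((1/n) * ∑ i, (ℓ i)^2) σ
    have ihh := ih (Kop β g) (Aop β n ℓ) (aop_nonneg hn hβ0 hℓ)
      (kop_profile_step hn hβ0 hℓ hg) σ
    have reindex : ∑ s ∈ Finset.range (t+1), (1/(n:ℝ)) * ∑ i, ((Aop β n)^[s] ℓ i)^2
        = (∑ s ∈ Finset.range t, (1/(n:ℝ)) * ∑ i, ((Aop β n)^[s] (Aop β n ℓ) i)^2)
          + (1/n) * ∑ i, (ℓ i)^2 := by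
      rw [Finset.sum_range_succ']
      simp [Function.iterate_succ_apply]
    rw [reindex]
    have e2 : (Kop β)^[t] (fun x => (Kop β g x)^2 + (1/n) * ∑ i, (ℓ i)^2) σ
        = (Kop β)^[t] (fun x => (Kop β g x)^2) σ + (1/n) * ∑ i, (ℓ i)^2 := addc
    calc (Kop β)^[t] (Kop β (fun x => (g x)^2)) σ - ((Kop β)^[t] (Kop β g) σ)^2
        ≤ (Kop β)^[t] (fun x => (Kop β g x)^2 + (1/n) * ∑ i, (ℓ i)^2) σ
            - ((Kop β)^[t] (Kop β g) σ)^2 := by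
          have := kop_iter_mono (β := β) t B0 σ
          linarith [this]
      _ = ((Kop β)^[t] (fun x => (Kop β g x)^2) σ - ((Kop β)^[t] (Kop β g) σ)^2)
            + (1/n) * ∑ i, (ℓ i)^2 := by rw [e2]; ring
      _ ≤ (∑ s ∈ Finset.range t, (1/(n:ℝ)) * ∑ i, ((Aop β n)^[s] (Aop β n ℓ) i)^2)
            + (1/n) * ∑ i, (ℓ i)^2 := by
          have : (Kop β)^[t] (fun x => (Kop β g x)^2) σ - ((Kop β)^[t] (Kop β g) σ)^2
              ≤ ∑ s ∈ Finset.range t, (1/(n:ℝ)) * ∑ i, ((Aop β n)^[s] (Aop β n ℓ) i)^2 := ihh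
          linarith


end Fixed

lemma kernel_apply {n : ℕ} (β : ℝ) (g : Config n → ℝ) (τ : Config n) :
    ∑ η, glauberKernel β n τ η * g η = Kop β g τ := by
  unfold glauberKernel Kop
  simp only [mul_assoc, ← Finset.mul_sum]
  congr 1
  simp only [Finset.sum_mul]
  rw [Finset.sum_comm]
  refine Finset.sum_congr rfl fun i _ => ?_
  have key : ∀ η : Config n,
      (if ∀ j, j ≠ i → η j = τ j then
        (if η i then prob β τ i else 1 - prob β τ i) else 0) * g η
      = (if η = Function.update τ i true then prob β τ i * g η else 0)
        + (if η = Function.update τ i false then (1 - prob β τ i) * g η else 0) := by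
    intro η
    have hne : Function.update τ i true ≠ Function.update τ i false := by
      intro h
      have := congrFun h i
      simp [Function.update] at this
    have hall : ∀ b : Bool, ∀ j, j ≠ i → Function.update τ i b j = τ j :=
      fun b j hj => Function.update_of_ne hj _ _
    by_cases hC : ∀ j, j ≠ i → η j = τ j
    · have hη : ∀ b : Bool, η i = b → η = Function.update τ i b := by
        intro b hb; funext j
        by_cases hj : j = i
        · subst hj; simp [Function.update, hb]
        · simp [Function.update, hj, hC j hj]
      by_cases hi : η i
      · have h1 : η = Function.update τ i true := hη true hi
        have h2 : η ≠ Function.update τ i false := by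
          intro h; rw [h] at hi; simp [Function.update] at hi
        simp only [hC, hi, h1, h2, hne, hne.symm, if_true, if_false, if_pos (hall _), if_neg hne,
          if_neg hne.symm, ite_true, ite_false, add_zero, zero_add, if_neg h2, if_true,
          Function.update_self, Bool.false_eq_true]
      · have h1 : η = Function.update τ i false := hη false (by simpa using hi)
        have h2 : η ≠ Function.update τ i true := by
          intro h; rw [h] at hi; simp [Function.update] at hi
        simp only [hC, hi, h1, h2, hne, hne.symm, if_true, if_false, if_pos (hall _), if_neg hne,
          if_neg hne.symm, ite_true, ite_false, add_zero, zero_add, if_neg h2, if_true,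
          Function.update_self, Bool.false_eq_true]
    · have h1 : η ≠ Function.update τ i true := by
        intro h; apply hC; intro j hj; rw [h]; simp [Function.update, hj]
      have h2 : η ≠ Function.update τ i false := by
        intro h; apply hC; intro j hj; rw [h]; simp [Function.update, hj]
      simp [hC, h1, h2]
  calc ∑ η, (if ∀ j, j ≠ i → η j = τ j then
        (if η i then prob β τ i else 1 - prob β τ i) else 0) * g η
      = ∑ η, ((if η = Function.update τ i true then prob β τ i * g η else 0)
        + (if η = Function.update τ i false then (1 - prob β τ i) * g η else 0)) :=
        Finset.sum_congr rfl fun η _ => key η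
    _ = _ := by
        rw [Finset.sum_add_distrib, Finset.sum_ite_eq' Finset.univ,
          Finset.sum_ite_eq' Finset.univ]
        simp

lemma law_apply {n : ℕ} (β : ℝ) (t : ℕ) (σ : Config n) (g : Config n → ℝ) :
    ∑ η, glauberLaw β n t σ η * g η = (Kop β)^[t] g σ := by
  induction t generalizing g with
  | zero => simp [glauberLaw]
  | succ t ih =>
    rw [Function.iterate_succ_apply, ← ih (Kop β g)]
    simp only [glauberLaw, Finset.sum_mul]
    rw [Finset.sum_comm]
    refine Finset.sum_congr rfl fun τ _ => ?_
    rw [← kernel_apply β g τ, Finset.mul_sum]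
    simp [mul_assoc]



section Assemble
variable {n : ℕ} {β : ℝ}

lemma rho_nonneg (hn : 0 < n) (hβ0 : 0 ≤ β) (hβ1 : β ≤ 1) : 0 ≤ 1 - (1 - β)/(n:ℝ) := by
  have hn' : (1:ℝ) ≤ n := by exact_mod_cast hn
  have : (1 - β)/(n:ℝ) ≤ 1 - β := div_le_self (by linarith) hn'
  linarith

lemma rho_lt_one (hn : 0 < n) (hβ1 : β < 1) : 1 - (1 - β)/(n:ℝ) < 1 := by
  have hn' : (0:ℝ) < n := by exact_mod_cast hn
  have h1 : (0:ℝ) < 1 - β := by linarith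
  have : 0 < (1 - β)/(n:ℝ) := div_pos h1 hn'
  linarith

lemma rho_pow_le_exp (hn : 0 < n) (hβ0 : 0 ≤ β) (hβ1 : β ≤ 1) (t : ℕ) :
    (1 - (1 - β)/(n:ℝ))^t ≤ Real.exp (-(1 - β) * t / n) := by
  have h1 : 1 - (1 - β)/(n:ℝ) ≤ Real.exp (-(1 - β)/n) := by
    have := Real.add_one_le_exp (-(1 - β)/(n:ℝ))
    have e : -(1 - β)/(n:ℝ) + 1 = 1 - (1 - β)/n := by ring
    linarith [e ▸ this]
  calc (1 - (1 - β)/(n:ℝ))^t ≤ (Real.exp (-(1 - β)/n))^t :=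
        pow_le_pow_left₀ (rho_nonneg hn hβ0 hβ1) h1 t
    _ = Real.exp ((t : ℝ) * (-(1 - β)/n)) := by rw [← Real.exp_nat_mul]
    _ = Real.exp (-(1 - β) * t / n) := by congr 1; ring

lemma geom_le (hn : 0 < n) (hβ0 : 0 ≤ β) (hβ1 : β < 1) (t : ℕ) :
    ∑ s ∈ Finset.range t, (1 - (1 - β)/(n:ℝ))^s ≤ n / (1 - β) := by
  set ρ : ℝ := 1 - (1 - β)/(n:ℝ) with hρ
  have hn' : (0:ℝ) < n := by exact_mod_cast hn
  have h1 : ρ < 1 := rho_lt_one hn hβ1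
  have h0 : 0 ≤ ρ := rho_nonneg hn hβ0 hβ1.le
  have hmul := geom_sum_mul ρ t
  have hpow : 0 ≤ ρ^t := pow_nonneg h0 t
  have hS : (∑ s ∈ Finset.range t, ρ^s) * (1 - ρ) ≤ 1 := by nlinarith [hmul]
  have h2 : (0:ℝ) < 1 - ρ := by linarith
  have h3 : (∑ s ∈ Finset.range t, ρ^s) ≤ 1 / (1 - ρ) := by
    rw [le_div_iff₀ h2]; exact hS
  have h4 : 1 - ρ = (1 - β)/n := by rw [hρ]; ring
  rw [h4, one_div_div] at h3
  exact h3

lemma glauberKernel_nonneg (τ η : Config n) : 0 ≤ glauberKernel β n τ η := by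
  unfold glauberKernel
  apply mul_nonneg (by positivity)
  apply Finset.sum_nonneg
  intro i _
  split_ifs with h1 h2
  · exact pPlus_nonneg _
  · linarith [pPlus_le_one (β := β) (s := mag τ - spin τ i / n)]
  · exact le_refl 0

lemma glauberLaw_nonneg (t : ℕ) (σ η : Config n) : 0 ≤ glauberLaw β n t σ η := by
  induction t generalizing η with
  | zero => unfold glauberLaw; split_ifs <;> norm_num
  | succ t ih =>
    unfold glauberLaw
    exact Finset.sum_nonneg fun τ _ => mul_nonneg (ih τ) (glauberKernel_nonneg τ η)

lemma kop_iter_const (hn : 0 < n) (t : ℕ) (c : ℝ) :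
    (Kop β)^[t] (fun _ : Config n => c) = fun _ : Config n => c := by
  induction t with
  | zero => rfl
  | succ t ih =>
    rw [Function.iterate_succ_apply]
    have : Kop β (fun _ : Config n => c) = fun _ : Config n => c := by
      funext τ; exact kop_const hn c τ
    rw [this, ih]

lemma glauberLaw_sum_one (hn : 0 < n) (t : ℕ) (σ : Config n) :
    ∑ η, glauberLaw β n t σ η = 1 := by
  have h := law_apply (n := n) β t σ (fun _ => 1)
  rw [kop_iter_const hn t 1] at h
  simpa using h

lemma profile_mag (hn : 0 < n) : Profile (mag (n := n)) (fun _ => 2 / n) := by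
  intro σ j
  rw [mag_flip]
  have e : mag σ - (mag σ - 2 * spin σ j / (n:ℝ)) = 2 * spin σ j / n := by ring
  rw [e, abs_div, abs_mul, abs_spin, abs_of_nonneg (Nat.cast_nonneg n : (0:ℝ) ≤ n)]
  norm_num

lemma profile_spin (i : Fin n) :
    Profile (fun η => spin η i) (fun j => if j = i then 2 else 0) := by
  intro σ j
  dsimp only
  by_cases h : j = i
  · subst h
    rw [if_pos rfl, spin_flip_self]
    have := abs_spin σ j
    rw [show spin σ j - -spin σ j = 2 * spin σ j by ring, abs_mul, this]
    norm_num
  · rw [if_neg h, spin_flip_other (fun hh => h hh.symm)]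
    simp

lemma sum_spin_flip (A : Finset (Fin n)) (σ : Config n) (j : Fin n) :
    (∑ i ∈ A, spin σ i) - (∑ i ∈ A, spin (flip j σ) i)
      = if j ∈ A then 2 * spin σ j else 0 := by
  rw [← Finset.sum_sub_distrib]
  by_cases hj : j ∈ A
  · rw [if_pos hj, Finset.sum_eq_single_of_mem j hj
      (fun i _ hij => by rw [spin_flip_other hij]; ring), spin_flip_self]
    ring
  · rw [if_neg hj, Finset.sum_eq_zero]
    intro i hi
    have hij : i ≠ j := fun h => hj (h ▸ hi)
    rw [spin_flip_other hij]; ring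

lemma profile_sumA (A : Finset (Fin n)) :
    Profile (fun η => (∑ i ∈ A, spin η i) / 2) (fun j => if j ∈ A then 1 else 0) := by
  intro σ j
  dsimp only
  have e : (∑ i ∈ A, spin σ i) / 2 - (∑ i ∈ A, spin (flip j σ) i) / 2
      = ((∑ i ∈ A, spin σ i) - (∑ i ∈ A, spin (flip j σ) i)) / 2 := by ring
  rw [e, sum_spin_flip]
  by_cases hj : j ∈ A
  · rw [if_pos hj, if_pos hj, abs_div, abs_mul, abs_spin σ j]
    norm_num
  · rw [if_neg hj, if_neg hj]
    norm_num

lemma odd_sumA (A : Finset (Fin n)) (σ : Config n) :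
    (∑ i ∈ A, spin (neg σ) i) / 2 = -((∑ i ∈ A, spin σ i) / 2) := by
  rw [Finset.sum_congr rfl fun i _ => spin_neg σ i, Finset.sum_neg_distrib]
  ring

lemma sum_indicator_card (A : Finset (Fin n)) :
    (∑ j : Fin n, if j ∈ A then (1:ℝ) else 0) = A.card := by
  rw [Finset.sum_ite_mem, Finset.univ_inter, Finset.sum_const, nsmul_eq_mul, mul_one]

/-- main variance bound for `M_t(A)` -/
lemma varA_le (hn : 0 < n) (hβ0 : 0 ≤ β) (hβ1 : β < 1) (t : ℕ)
    (A : Finset (Fin n)) (σ : Config n) :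
    (Kop β)^[t] (fun x => ((∑ i ∈ A, spin x i) / 2)^2) σ
      - ((Kop β)^[t] (fun x => (∑ i ∈ A, spin x i) / 2) σ)^2 ≤ n / (1 - β) := by
  set ℓA : Fin n → ℝ := fun j => if j ∈ A then 1 else 0 with hℓA
  have hℓ0 : ∀ i, 0 ≤ ℓA i := fun i => by simp only [hℓA]; split_ifs <;> norm_num
  have hℓ1 : ∀ i, ℓA i ≤ 1 := fun i => by simp only [hℓA]; split_ifs <;> norm_num
  have hprof := profile_sumA A
  have htel := kop_var_telescope hn hβ0 t (fun x => (∑ i ∈ A, spin x i) / 2) ℓA hℓ0 hprof σ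
  refine htel.trans ?_
  have hstep : ∀ s, (1/(n:ℝ)) * ∑ i, ((Aop β n)^[s] ℓA i)^2 ≤ (1 - (1 - β)/n)^s := by
    intro s
    set ρ : ℝ := 1 - (1 - β)/(n:ℝ) with hρdef
    have hub := aop_iter_ptwise hn hβ0 hβ1.le s ℓA 1 (by norm_num) hℓ1 hℓ0
    have h0 := aop_iter_nonneg hn hβ0 s hℓ0
    have hρ0 : 0 ≤ ρ := rho_nonneg hn hβ0 hβ1.le
    have hρ1 : ρ ≤ 1 := by
      rw [hρdef]
      have := rho_lt_one hn hβ1; linarith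
    have hρs1 : ρ^s ≤ 1 := pow_le_one₀ hρ0 hρ1
    have hρs0 : 0 ≤ ρ^s := pow_nonneg hρ0 s
    have hsq : ∀ i, ((Aop β n)^[s] ℓA i)^2 ≤ ρ^s * ((Aop β n)^[s] ℓA i) := by
      intro i
      have h1 := hub i
      have h2 := h0 i
      nlinarith [mul_one (ρ^s)]
    have hsum : ∑ i, ((Aop β n)^[s] ℓA i)^2 ≤ ρ^s * ∑ i, (Aop β n)^[s] ℓA i := by
      rw [Finset.mul_sum]
      exact Finset.sum_le_sum fun i _ => hsq i
    have hsum2 : ∑ i, (Aop β n)^[s] ℓA i = ρ^s * A.card := by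
      rw [aop_iter_sum hn, sum_indicator_card]
    have hcard : (A.card : ℝ) ≤ n := by
      exact_mod_cast (Finset.card_le_univ A).trans_eq (by simp)
    have hn' : (0:ℝ) < n := by exact_mod_cast hn
    calc (1/(n:ℝ)) * ∑ i, ((Aop β n)^[s] ℓA i)^2
        ≤ (1/(n:ℝ)) * (ρ^s * (ρ^s * A.card)) := by
          apply mul_le_mul_of_nonneg_left _ (by positivity)
          rw [← hsum2]; exact hsum
      _ ≤ ρ^s := by
          rw [div_mul_eq_mul_div, one_mul, div_le_iff₀ hn']
          have hc0 : (0:ℝ) ≤ (A.card : ℝ) := Nat.cast_nonneg _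
          nlinarith [mul_nonneg hρs0 (sub_nonneg.mpr hcard),
            mul_nonneg (mul_nonneg hρs0 hc0) (sub_nonneg.mpr hρs1)]
  calc ∑ s ∈ Finset.range t, (1/(n:ℝ)) * ∑ i, ((Aop β n)^[s] ℓA i)^2
      ≤ ∑ s ∈ Finset.range t, (1 - (1 - β)/(n:ℝ))^s :=
        Finset.sum_le_sum fun s _ => hstep s
    _ ≤ n / (1 - β) := geom_le hn hβ0 hβ1 t

end Assemble


section Helper
variable {n : ℕ} {β : ℝ}

lemma meanA_le (hn : 0 < n) (hβ0 : 0 ≤ β) (hβ1 : β < 1) (t : ℕ)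
    (A : Finset (Fin n)) (σ : Config n) :
    |(Kop β)^[t] (fun η => (∑ i ∈ A, spin η i) / 2) σ|
      ≤ A.card * Real.exp (-(1 - β) * t / n) := by
  have hℓ0 : ∀ i : Fin n, 0 ≤ if i ∈ A then (1:ℝ) else 0 := fun i => by
    split_ifs <;> norm_num
  have h := kop_iter_abs_le hn hβ0 t hℓ0 (profile_sumA A) (fun σ => odd_sumA A σ) σ
  rw [sum_indicator_card] at h
  have hρe := rho_pow_le_exp hn hβ0 hβ1.le t
  have hc0 : (0:ℝ) ≤ (A.card : ℝ) := Nat.cast_nonneg _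
  have hexp := (Real.exp_pos (-(1 - β) * t / n)).le
  have hρ0 : (0:ℝ) ≤ (1 - (1 - β)/(n:ℝ))^t := pow_nonneg (rho_nonneg hn hβ0 hβ1.le) t
  refine h.trans ?_
  have h2 : (1 - (1 - β)/(n:ℝ))^t * A.card ≤ Real.exp (-(1 - β) * t / n) * A.card :=
    mul_le_mul_of_nonneg_right hρe hc0
  nlinarith [mul_nonneg hexp hc0]

lemma sqrt_add_sq_le (a b : ℝ) (ha : 0 ≤ a) :
    Real.sqrt (a + b^2) ≤ Real.sqrt a + |b| := by
  have key : a + b^2 ≤ (Real.sqrt a + |b|)^2 := by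
    nlinarith [Real.sq_sqrt ha, Real.sqrt_nonneg a, abs_nonneg b, sq_abs b,
      mul_nonneg (Real.sqrt_nonneg a) (abs_nonneg b)]
  calc Real.sqrt (a + b^2) ≤ Real.sqrt ((Real.sqrt a + |b|)^2) := Real.sqrt_le_sqrt key
    _ = Real.sqrt a + |b| := Real.sqrt_sq (by positivity)

end Helper

/-- Decay of expected spin values at high temperature (`0 ≤ β < 1`):
(i) for every start `σ`, time `t` and vertex `i`,
`|E_σ[S(X_t)]| ≤ 2 e^{-(1-β)t/n}` and `|E_σ[X_t(i)]| ≤ 2 e^{-(1-β)t/n}`;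
(ii) for every set of vertices `A`, with `M_t(A) = (1/2) ∑_{i∈A} X_t(i)`,
`|E_σ[M_t(A)]| ≤ |A| e^{-(1-β)t/n}` and `Var(M_t(A)) ≤ c n` for a constant
`c > 0` depending only on `β`;
(iii) for a constant `C > 0` depending only on `β`, every `A` and every `σ`,
`E_σ[|M_t(A)|] ≤ n e^{-(1-β)t/n} + C √n`. -/
theorem spin_decay (β : ℝ) (hβ0 : 0 ≤ β) (hβ1 : β < 1) :
    (∀ (n : ℕ) (σ : Config n) (t : ℕ) (i : Fin n),
      |∑ η, glauberLaw β n t σ η * mag η| ≤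
          2 * Real.exp (-(1 - β) * t / n) ∧
      |∑ η, glauberLaw β n t σ η * spin η i| ≤
          2 * Real.exp (-(1 - β) * t / n)) ∧
    (∃ c > (0 : ℝ), ∀ (n : ℕ) (A : Finset (Fin n)) (σ : Config n) (t : ℕ),
      |∑ η, glauberLaw β n t σ η * ((∑ i ∈ A, spin η i) / 2)| ≤
          (A.card : ℝ) * Real.exp (-(1 - β) * t / n) ∧
      (∑ η, glauberLaw β n t σ η * ((∑ i ∈ A, spin η i) / 2) ^ 2) -
          (∑ η, glauberLaw β n t σ η * ((∑ i ∈ A, spin η i) / 2)) ^ 2 ≤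
        c * n) ∧
    (∃ C > (0 : ℝ), ∀ (n : ℕ) (A : Finset (Fin n)) (σ : Config n) (t : ℕ),
      ∑ η, glauberLaw β n t σ η * |(∑ i ∈ A, spin η i) / 2| ≤
        n * Real.exp (-(1 - β) * t / n) + C * Real.sqrt n) := by
  have h1β : (0:ℝ) < 1 - β := by linarith
  constructor
  · -- part (i)
    intro n σ t i
    have hn : 0 < n := i.pos
    have hρe := rho_pow_le_exp (β := β) hn hβ0 hβ1.le t
    have hexp := (Real.exp_pos (-(1 - β) * t / n)).le
    constructor
    · rw [law_apply]
      have h := kop_iter_abs_le hn hβ0 t (fun _ => by positivity) (profile_mag hn)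
        (fun σ => mag_neg σ) σ
      have hsum : (∑ _j : Fin n, (2:ℝ)/n) = 2 := by
        rw [Finset.sum_const, Finset.card_univ, Fintype.card_fin, nsmul_eq_mul]
        field_simp
      rw [hsum] at h
      have e : (1 - (1 - β)/(n:ℝ))^t * 2 / 2 = (1 - (1 - β)/(n:ℝ))^t := by ring
      rw [e] at h
      linarith
    · rw [law_apply]
      have hℓ0 : ∀ j : Fin n, 0 ≤ if j = i then (2:ℝ) else 0 := fun j => by
        split_ifs <;> norm_num
      have h := kop_iter_abs_le hn hβ0 t hℓ0 (profile_spin i)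
        (fun σ => spin_neg σ i) σ
      have hsum : (∑ j : Fin n, if j = i then (2:ℝ) else 0) = 2 := by
        rw [Finset.sum_ite_eq' Finset.univ]
        simp
      rw [hsum] at h
      have e : (1 - (1 - β)/(n:ℝ))^t * 2 / 2 = (1 - (1 - β)/(n:ℝ))^t := by ring
      rw [e] at h
      linarith
  constructor
  · -- part (ii)
    refine ⟨1/(1-β), div_pos one_pos h1β, ?_⟩
    intro n A σ t
    by_cases hn0 : n = 0
    · subst hn0
      have hA : A = ∅ := Finset.eq_empty_of_isEmpty A
      constructor
      · simp [hA]
      · simp [hA]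
    · have hn : 0 < n := Nat.pos_of_ne_zero hn0
      constructor
      · rw [law_apply]
        exact meanA_le hn hβ0 hβ1 t A σ
      · rw [law_apply (n := n) β t σ (fun η => ((∑ i ∈ A, spin η i)/2)^2),
          law_apply (n := n) β t σ (fun η => (∑ i ∈ A, spin η i)/2)]
        have h := varA_le hn hβ0 hβ1 t A σ
        have e : (n:ℝ)/(1-β) = 1/(1-β) * n := by ring
        rw [e] at h
        exact h
  · -- part (iii)
    have hC : (0:ℝ) < 1/(1-β) := div_pos one_pos h1β
    refine ⟨Real.sqrt (1/(1-β)), Real.sqrt_pos.mpr hC, ?_⟩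
    intro n A σ t
    by_cases hn0 : n = 0
    · subst hn0
      have hA : A = ∅ := Finset.eq_empty_of_isEmpty A
      simp [hA]
    · have hn : 0 < n := Nat.pos_of_ne_zero hn0
      have hp : ∀ η, 0 ≤ glauberLaw β n t σ η := glauberLaw_nonneg t σ
      have hps : ∑ η, glauberLaw β n t σ η = 1 := glauberLaw_sum_one hn t σ
      set f : Config n → ℝ := fun η => (∑ i ∈ A, spin η i)/2 with hf
      have cs := Finset.sum_mul_sq_le_sq_mul_sq Finset.univ
        (fun η => Real.sqrt (glauberLaw β n t σ η))
        (fun η => Real.sqrt (glauberLaw β n t σ η) * |f η|)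
      have e1 : ∀ η : Config n, Real.sqrt (glauberLaw β n t σ η)
          * (Real.sqrt (glauberLaw β n t σ η) * |f η|) = glauberLaw β n t σ η * |f η| :=
        fun η => by rw [← mul_assoc, Real.mul_self_sqrt (hp η)]
      have e2 : ∀ η : Config n, (Real.sqrt (glauberLaw β n t σ η))^2 = glauberLaw β n t σ η :=
        fun η => Real.sq_sqrt (hp η)
      have e3 : ∀ η : Config n, (Real.sqrt (glauberLaw β n t σ η) * |f η|)^2
          = glauberLaw β n t σ η * (f η)^2 :=
        fun η => by rw [mul_pow, Real.sq_sqrt (hp η), sq_abs]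
      rw [Finset.sum_congr rfl (fun η _ => e1 η), Finset.sum_congr rfl (fun η _ => e2 η),
        Finset.sum_congr rfl (fun η _ => e3 η), hps, one_mul] at cs
      have hEabs : 0 ≤ ∑ η, glauberLaw β n t σ η * |f η| :=
        Finset.sum_nonneg fun η _ => mul_nonneg (hp η) (abs_nonneg _)
      have hm2 : ∑ η, glauberLaw β n t σ η * (f η)^2
          = (Kop β)^[t] (fun x => (f x)^2) σ :=
        law_apply (n := n) β t σ (fun η => (f η)^2)
      have hm1 : ∑ η, glauberLaw β n t σ η * f η = (Kop β)^[t] f σ :=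
        law_apply (n := n) β t σ f
      have hvar := varA_le hn hβ0 hβ1 t A σ
      have hmean := meanA_le hn hβ0 hβ1 t A σ
      have hsecond : ∑ η, glauberLaw β n t σ η * (f η)^2
          ≤ n/(1-β) + ((Kop β)^[t] f σ)^2 := by
        rw [hm2]
        have : (Kop β)^[t] (fun x => ((∑ i ∈ A, spin x i) / 2)^2) σ
            - ((Kop β)^[t] (fun x => (∑ i ∈ A, spin x i) / 2) σ)^2 ≤ n / (1 - β) := hvar
        have ef : (fun x => (f x)^2) = fun x => ((∑ i ∈ A, spin x i) / 2)^2 := rfl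
        rw [ef]
        linarith
      have h1 : ∑ η, glauberLaw β n t σ η * |f η|
          ≤ Real.sqrt (n/(1-β) + ((Kop β)^[t] f σ)^2) := by
        have h0 : 0 ≤ (n:ℝ)/(1-β) + ((Kop β)^[t] f σ)^2 := by
          have : (0:ℝ) ≤ (n:ℝ)/(1-β) := div_nonneg (Nat.cast_nonneg n) h1β.le
          nlinarith [sq_nonneg ((Kop β)^[t] f σ)]
        rw [Real.le_sqrt hEabs h0]
        exact cs.trans hsecond
      have h2 : Real.sqrt ((n:ℝ)/(1-β) + ((Kop β)^[t] f σ)^2)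
          ≤ Real.sqrt ((n:ℝ)/(1-β)) + |(Kop β)^[t] f σ| :=
        sqrt_add_sq_le _ _ (div_nonneg (Nat.cast_nonneg n) h1β.le)
      have h3 : Real.sqrt ((n:ℝ)/(1-β)) = Real.sqrt (1/(1-β)) * Real.sqrt n := by
        rw [show (n:ℝ)/(1-β) = 1/(1-β) * n by ring, Real.sqrt_mul hC.le]
      have h4 : |(Kop β)^[t] f σ| ≤ n * Real.exp (-(1 - β) * t / n) := by
        refine hmean.trans ?_
        have hcard : (A.card : ℝ) ≤ n := by
          exact_mod_cast (Finset.card_le_univ A).trans_eq (by simp)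
        exact mul_le_mul_of_nonneg_right hcard (Real.exp_pos _).le
      calc ∑ η, glauberLaw β n t σ η * |(∑ i ∈ A, spin η i)/2|
          ≤ Real.sqrt (n/(1-β) + ((Kop β)^[t] f σ)^2) := h1
        _ ≤ Real.sqrt ((n:ℝ)/(1-β)) + |(Kop β)^[t] f σ| := h2
        _ ≤ Real.sqrt (1/(1-β)) * Real.sqrt n + n * Real.exp (-(1 - β) * t / n) := by
            rw [h3]; linarith
        _ = n * Real.exp (-(1 - β) * t / n) + Real.sqrt (1/(1-β)) * Real.sqrt n := by ring


end

end CW
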